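/- Let P = (1/2)P₁ + (1/2)P₂ where P₁ is uniform on [0, 1/2] and P₂ is the uniform discrete measure on {2/3, 5/6, 1}. Then the set {1/8, 3/8, 2/3, 5/6, 1} is an optimal set of five-means for P, and the corresponding quantization error is V₅(P) = 1/384. -/

import Mathlib

open MeasureTheory Set Filter Real
open scoped ENNReal

/-- Distortion error of a finite set of quantizers `γ` for the measure `P`. -/
noncomputable def distortion (P : Measure ℝ) (γ : Finset ℝ) : ℝ :=
  ∫ x, (⨅ c : γ, (x - (c : ℝ)) ^ 2) ∂P

/-- The `n`-th quantization error of `P`. -/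
noncomputable def quantErr (P : Measure ℝ) (n : ℕ) : ℝ :=
  sInf {v : ℝ | ∃ γ : Finset ℝ, γ.Nonempty ∧ γ.card ≤ n ∧ v = distortion P γ}

/-- `γ` is an optimal set of `n`-means for `P`. -/
def IsOptimalSet (P : Measure ℝ) (n : ℕ) (γ : Finset ℝ) : Prop :=
  γ.Nonempty ∧ γ.card ≤ n ∧ distortion P γ = quantErr P n

/-- Uniform distribution on `[a, b]`. -/
noncomputable def unif (a b : ℝ) : Measure ℝ :=
  (ENNReal.ofReal (b - a))⁻¹ • (volume.restrict (Icc a b))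

/-- The uniform discrete measure on `{2/3, 5/6, 1}`. -/
noncomputable def discD : Measure ℝ :=
  (3 : ℝ≥0∞)⁻¹ • (Measure.dirac (2/3) + Measure.dirac (5/6) + Measure.dirac 1)

/-- Mixture `(1/2)P₁ + (1/2)P₂`. -/
noncomputable def mix (P₁ P₂ : Measure ℝ) : Measure ℝ :=
  (2 : ℝ≥0∞)⁻¹ • P₁ + (2 : ℝ≥0∞)⁻¹ • P₂

noncomputable def fmin (γ : Finset ℝ) (x : ℝ) : ℝ := ⨅ c : γ, (x - (c : ℝ)) ^ 2

lemma fmin_eq_inf' (γ : Finset ℝ) (h : γ.Nonempty) (x : ℝ) :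
    fmin γ x = γ.inf' h (fun c => (x - c) ^ 2) := by
  rw [fmin, Finset.inf'_eq_csInf_image, iInf]
  congr 1
  rw [show (fun c : γ => (x-(c:ℝ))^2) = (fun y : ℝ => (x-y)^2) ∘ (fun c : γ => (c:ℝ)) from rfl,
    Set.range_comp]
  simp

lemma fmin_continuous (γ : Finset ℝ) (h : γ.Nonempty) : Continuous (fmin γ) := by
  have h2 : Continuous fun x => γ.inf' h (fun c => (x - c) ^ 2) := by
    induction h using Finset.Nonempty.cons_induction with
    | singleton a => simpa using (show Continuous fun x : ℝ => (x - a) ^ 2 from (continuous_id.sub continuous_const).pow 2)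
    | cons a s ha hs ih =>
      simp only [Finset.inf'_cons (H := hs)]
      exact ((continuous_id.sub continuous_const).pow 2).min ih
  have : fmin γ = fun x => γ.inf' h (fun c => (x - c) ^ 2) := by
    ext x; exact fmin_eq_inf' γ h x
  rw [this]; exact h2

lemma fmin_nonneg (γ : Finset ℝ) (h : γ.Nonempty) (x : ℝ) : 0 ≤ fmin γ x := by
  rw [fmin_eq_inf' γ h]
  exact Finset.le_inf' h _ (fun c _ => sq_nonneg _)

lemma fmin_le (γ : Finset ℝ) (h : γ.Nonempty) {c : ℝ} (hc : c ∈ γ) (x : ℝ) :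
    fmin γ x ≤ (x - c) ^ 2 := by
  rw [fmin_eq_inf' γ h]
  exact Finset.inf'_le _ hc

lemma le_fmin (γ : Finset ℝ) (h : γ.Nonempty) {x v : ℝ} (hv : ∀ c ∈ γ, v ≤ (x - c) ^ 2) :
    v ≤ fmin γ x := by
  rw [fmin_eq_inf' γ h]
  exact Finset.le_inf' h _ hv

lemma int_sq (a b c : ℝ) : ∫ x in a..b, (x - c)^2 = ((b-c)^3 - (a-c)^3)/3 := by
  rw [intervalIntegral.integral_comp_sub_right (fun x => x^2) c, integral_pow]
  norm_num

lemma int_sq_ge (a b c : ℝ) (hab : a ≤ b) : (b-a)^3/12 ≤ ∫ x in a..b, (x - c)^2 := by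
  rw [int_sq]
  nlinarith [mul_nonneg (sub_nonneg.2 hab) (sq_nonneg (a + b - 2*c)), sq_nonneg (a+b-2*c)]

lemma radon (u v N : ℝ) (hu : 0 ≤ u) (hv : 0 ≤ v) (hN : 1 ≤ N) :
    (u+v)^3/(12*(N+1)^2) ≤ u^3/(12*N^2) + v^3/12 := by
  have hN0 : (0:ℝ) < N := by linarith
  have key : (u+v)^3*N^2 ≤ u^3*(N+1)^2 + v^3*N^2*(N+1)^2 := by
    nlinarith [mul_nonneg (sq_nonneg (u - N*v))
      (by nlinarith : (0:ℝ) ≤ (2*N+1)*u + (N^2+2*N)*v)]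
  rw [div_add_div _ _ (by positivity) (by norm_num), div_le_div_iff₀ (by positivity) (by positivity)]
  nlinarith [key, sq_nonneg N, sq_nonneg (N+1)]

lemma fmin_intervalIntegrable (γ : Finset ℝ) (h : γ.Nonempty) (a b : ℝ) :
    IntervalIntegrable (fmin γ) volume a b :=
  (fmin_continuous γ h).intervalIntegrable a b

lemma quant_lb : ∀ (n : ℕ) (γ : Finset ℝ) (h : γ.Nonempty), γ.card = n → ∀ a b : ℝ, a ≤ b →
    (b-a)^3/(12*(n:ℝ)^2) ≤ ∫ x in a..b, fmin γ x := by
  intro n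
  induction n with
  | zero => intro γ h hcard; exact absurd (Finset.card_eq_zero.mp hcard) h.ne_empty
  | succ n IH =>
    intro γ h hcard a b hab
    rcases Nat.eq_zero_or_pos n with hn0 | hn1
    · -- card = 1
      subst hn0
      obtain ⟨c, hc⟩ := Finset.card_eq_one.mp (by simpa using hcard)
      subst hc
      have hptw1 : ∀ x ∈ Icc a b, (x - c)^2 ≤ fmin {c} x := by
        intro x _
        exact le_fmin _ ⟨c, Finset.mem_singleton_self c⟩ (by
          intro c' hc'; rw [Finset.mem_singleton.mp hc'])
      have h12 : (b-a)^3/(12*((0+1:ℕ):ℝ)^2) = (b-a)^3/12 := by norm_num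
      rw [h12]
      calc (b-a)^3/12 = (b-a)^3/12 := rfl
        _ ≤ ∫ x in a..b, (x - c)^2 := int_sq_ge a b c hab
        _ ≤ ∫ x in a..b, fmin {c} x := by
            apply intervalIntegral.integral_mono_on hab
              (((continuous_id.sub continuous_const).pow 2).intervalIntegrable a b)
              (fmin_intervalIntegrable _ ⟨c, Finset.mem_singleton_self c⟩ a b) hptw1
    · -- card = n+1, n ≥ 1
      set c := γ.max' h with hc
      have hcmem : c ∈ γ := γ.max'_mem h
      set γ' := γ.erase c with hγ'
      have hcard' : γ'.card = n := by
        rw [hγ', Finset.card_erase_of_mem hcmem, hcard]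
        omega
      have h' : γ'.Nonempty := Finset.card_pos.mp (by rw [hcard']; exact hn1)
      set m := γ'.max' h' with hm
      have hmmem : m ∈ γ' := γ'.max'_mem h'
      have hmc : m ≤ c := γ.le_max' m (Finset.mem_of_mem_erase hmmem)
      have hmem' : ∀ y ∈ γ', y ≤ m := fun y hy => γ'.le_max' y hy
      have hall : ∀ y ∈ γ, y ≤ c := fun y hy => γ.le_max' y hy
      set mid := (m + c)/2 with hmid
      set t := max a (min b mid) with ht
      have hat : a ≤ t := le_max_left _ _
      have htb : t ≤ b := max_le hab (min_le_left _ _)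
      have claim1 : (t-a)^3/(12*(n:ℝ)^2) ≤ ∫ x in a..t, fmin γ x := by
        rcases le_or_gt a mid with hcase | hcase
        · have htmid : t ≤ mid := max_le hcase (min_le_right _ _)
          have heq : EqOn (fmin γ) (fmin γ') (Icc a t) := by
            intro x hx
            apply le_antisymm
            · exact le_fmin γ' h' (fun c' hc' => fmin_le γ h (Finset.mem_of_mem_erase hc') x)
            · apply le_fmin γ h
              intro c' hc'
              rcases eq_or_ne c' c with heq' | hne
              · rw [heq']
                calc fmin γ' x ≤ (x - m)^2 := fmin_le γ' h' hmmem x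
                  _ ≤ (x - c)^2 := by
                    have hxmid : x ≤ mid := le_trans hx.2 htmid
                    have hxm : (x - m)^2 ≤ (x - c)^2 := by nlinarith [hmc, hxmid]
                    exact hxm
              · exact fmin_le γ' h' (Finset.mem_erase.mpr ⟨hne, hc'⟩) x
          rw [intervalIntegral.integral_congr (by
            rwa [Set.uIcc_of_le hat] )]
          exact IH γ' h' hcard' a t hat
        · have hta : t = a := by
            rw [ht, max_eq_left]
            exact le_trans (min_le_right _ _) (le_of_lt hcase)
          rw [hta]
          simp
      have claim2 : (b-t)^3/12 ≤ ∫ x in t..b, fmin γ x := by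
        rcases le_or_gt mid b with hcase | hcase
        · have htmid : mid ≤ t := le_trans (le_of_eq (min_eq_right hcase).symm) (le_max_right a _)
          have hptw : ∀ x ∈ Icc t b, (x - c)^2 ≤ fmin γ x := by
            intro x hx
            apply le_fmin γ h
            intro c' hc'
            rcases eq_or_ne c' c with heq' | hne
            · rw [heq']
            · have hc'm : c' ≤ m := hmem' c' (Finset.mem_erase.mpr ⟨hne, hc'⟩)
              have hxmid : mid ≤ x := le_trans htmid hx.1
              nlinarith [hmc, hc'm, hxmid]
          calc (b-t)^3/12 ≤ ∫ x in t..b, (x - c)^2 := int_sq_ge t b c htb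
            _ ≤ ∫ x in t..b, fmin γ x :=
              intervalIntegral.integral_mono_on htb
                (((continuous_id.sub continuous_const).pow 2).intervalIntegrable t b)
                (fmin_intervalIntegrable γ h t b) hptw
        · have htb' : t = b := by
            rw [ht, min_eq_left (le_of_lt hcase), max_eq_right hab]
          rw [htb']
          simp
      have hsplit : ∫ x in a..b, fmin γ x = (∫ x in a..t, fmin γ x) + ∫ x in t..b, fmin γ x :=
        (intervalIntegral.integral_add_adjacent_intervals
          (fmin_intervalIntegrable γ h a t) (fmin_intervalIntegrable γ h t b)).symm
      have hrad := radon (t-a) (b-t) (n:ℝ) (by linarith) (by linarith)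
        (by exact_mod_cast hn1)
      push_cast
      rw [hsplit]
      calc (b - a)^3/(12*((n:ℝ)+1)^2) = ((t-a)+(b-t))^3/(12*((n:ℝ)+1)^2) := by ring_nf
        _ ≤ (t-a)^3/(12*(n:ℝ)^2) + (b-t)^3/12 := hrad
        _ ≤ _ := add_le_add claim1 claim2

lemma three_pt_lb (γ : Finset ℝ) (h : γ.Nonempty) (c : ℝ) (hcγ : c ∈ γ)
    (hmax : ∀ y ∈ γ, y ≤ c) (hc12 : 1/2 ≤ c) (hcard : γ.card ≤ 3) :
    c^3/75 - (c-1/2)^3/3 ≤ ∫ x in (0:ℝ)..(1/2), fmin γ x := by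
  have hkey : ∀ t : ℝ, 0 ≤ t → t ≤ 1/2 →
      c^3/75 - (c-1/2)^3/3 ≤ t^3/48 + ((c-t)^3 - (c-1/2)^3)/3 := by
    intro t ht0 ht12
    nlinarith [mul_nonneg (sq_nonneg (5*t - 4*c)) (by linarith : (0:ℝ) ≤ 8*c - 5*t)]
  rcases eq_or_lt_of_le (show 1 ≤ γ.card from Finset.card_pos.mpr h) with hc1 | hc2
  · -- card = 1, γ = {c}
    obtain ⟨d, hd⟩ := Finset.card_eq_one.mp hc1.symm
    have hdc : d = c := by
      have := hcγ; rw [hd, Finset.mem_singleton] at this; exact this.symm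
    subst hdc
    rw [hd] at *
    have heq : EqOn (fmin {d}) (fun x => (x - d)^2) (uIcc (0:ℝ) (1/2)) := by
      intro x _
      apply le_antisymm (fmin_le _ ⟨d, Finset.mem_singleton_self d⟩ (Finset.mem_singleton_self d) x)
      exact le_fmin _ ⟨d, Finset.mem_singleton_self d⟩ (by
        intro c' hc'; rw [Finset.mem_singleton.mp hc'])
    rw [intervalIntegral.integral_congr heq, int_sq]
    nlinarith [hc12, pow_nonneg (by linarith : (0:ℝ) ≤ d) 3]
  · -- card ≥ 2
    set γ' := γ.erase c with hγ'
    have hcard' : γ'.card = γ.card - 1 := Finset.card_erase_of_mem hcγ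
    have h' : γ'.Nonempty := Finset.card_pos.mp (by omega)
    set m := γ'.max' h' with hm
    have hmmem : m ∈ γ' := γ'.max'_mem h'
    have hmc : m ≤ c := hmax m (Finset.mem_of_mem_erase hmmem)
    have hmem' : ∀ y ∈ γ', y ≤ m := fun y hy => γ'.le_max' y hy
    set mid := (m + c)/2 with hmid
    set t := max 0 (min (1/2) mid) with ht
    have hat : (0:ℝ) ≤ t := le_max_left _ _
    have htb : t ≤ 1/2 := max_le (by norm_num) (min_le_left _ _)
    have claim1 : t^3/48 ≤ ∫ x in (0:ℝ)..t, fmin γ x := by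
      rcases le_or_gt 0 mid with hcase | hcase
      · have htmid : t ≤ mid := max_le hcase (min_le_right _ _)
        have heq : EqOn (fmin γ) (fmin γ') (Icc 0 t) := by
          intro x hx
          apply le_antisymm
          · exact le_fmin γ' h' (fun c' hc' => fmin_le γ h (Finset.mem_of_mem_erase hc') x)
          · apply le_fmin γ h
            intro c' hc'
            rcases eq_or_ne c' c with heq' | hne
            · rw [heq']
              have hxmid : x ≤ mid := le_trans hx.2 htmid
              calc fmin γ' x ≤ (x - m)^2 := fmin_le γ' h' hmmem x
                _ ≤ (x - c)^2 := by nlinarith [hmc, hxmid]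
            · exact fmin_le γ' h' (Finset.mem_erase.mpr ⟨hne, hc'⟩) x
        rw [intervalIntegral.integral_congr (by rwa [Set.uIcc_of_le hat])]
        have hq := quant_lb γ'.card γ' h' rfl 0 t hat
        have hcard2 : γ'.card ≤ 2 := by omega
        have hd1 : (1:ℝ) ≤ (γ'.card : ℝ) := by
          exact_mod_cast Nat.one_le_iff_ne_zero.mpr (Finset.card_ne_zero_of_mem hmmem)
        calc t^3/48 ≤ (t-0)^3/(12*(γ'.card:ℝ)^2) := by
              rw [sub_zero]
              apply div_le_div_of_nonneg_left (by positivity) (by positivity)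
              have : ((γ'.card:ℝ))^2 ≤ 4 := by nlinarith [show ((γ'.card:ℝ)) ≤ 2 by exact_mod_cast hcard2]
              nlinarith
          _ ≤ _ := hq
      · have hta : t = 0 := by
          rw [ht, max_eq_left]
          exact le_trans (min_le_right _ _) (le_of_lt hcase)
        rw [hta]
        simp
    have claim2 : ((c-t)^3 - (c-1/2)^3)/3 ≤ ∫ x in t..(1/2 : ℝ), fmin γ x := by
      rcases le_or_gt mid (1/2) with hcase | hcase
      · have htmid : mid ≤ t := le_trans (le_of_eq (min_eq_right hcase).symm) (le_max_right 0 _)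
        have hptw : ∀ x ∈ Icc t (1/2 : ℝ), (x - c)^2 ≤ fmin γ x := by
          intro x hx
          apply le_fmin γ h
          intro c' hc'
          rcases eq_or_ne c' c with heq' | hne
          · rw [heq']
          · have hc'm : c' ≤ m := hmem' c' (Finset.mem_erase.mpr ⟨hne, hc'⟩)
            have hxmid : mid ≤ x := le_trans htmid hx.1
            nlinarith [hmc, hc'm, hxmid]
        calc ((c-t)^3 - (c-1/2)^3)/3 = ∫ x in t..(1/2:ℝ), (x - c)^2 := by
              rw [int_sq]; ring
          _ ≤ _ := intervalIntegral.integral_mono_on htb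
              (((continuous_id.sub continuous_const).pow 2).intervalIntegrable t _)
              (fmin_intervalIntegrable γ h t _) hptw
      · have htb' : t = 1/2 := by
          rw [ht, min_eq_left (le_of_lt hcase), max_eq_right (by norm_num)]
        rw [htb']
        norm_num
    have hsplit : ∫ x in (0:ℝ)..(1/2), fmin γ x
        = (∫ x in (0:ℝ)..t, fmin γ x) + ∫ x in t..(1/2:ℝ), fmin γ x :=
      (intervalIntegral.integral_add_adjacent_intervals
        (fmin_intervalIntegrable γ h 0 t) (fmin_intervalIntegrable γ h t _)).symm
    rw [hsplit]
    calc c^3/75 - (c-1/2)^3/3 ≤ t^3/48 + ((c-t)^3 - (c-1/2)^3)/3 := hkey t hat htb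
      _ ≤ _ := add_le_add claim1 claim2

set_option maxHeartbeats 1000000 in
lemma pigeon (p q : ℝ) :
    1/72 ≤ min ((2/3-p)^2) ((2/3-q)^2) + min ((5/6-p)^2) ((5/6-q)^2) + min ((1-p)^2) ((1-q)^2) := by
  rcases min_cases ((2/3-p)^2) ((2/3-q)^2) with ⟨e1,_⟩|⟨e1,_⟩ <;>
  rcases min_cases ((5/6-p)^2) ((5/6-q)^2) with ⟨e2,_⟩|⟨e2,_⟩ <;>
  rcases min_cases ((1-p)^2) ((1-q)^2) with ⟨e3,_⟩|⟨e3,_⟩ <;>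
  rw [e1, e2, e3] <;>
  nlinarith [sq_nonneg (3/2 - 2*p), sq_nonneg (3/2 - 2*q), sq_nonneg (11/6 - 2*p),
    sq_nonneg (11/6 - 2*q), sq_nonneg (5/3 - 2*p), sq_nonneg (5/3 - 2*q)]

lemma minsum (u d1 d2 d3 : ℝ) (hu : 0 ≤ u) (h1 : 0 ≤ d1) (h2 : 0 ≤ d2) (h3 : 0 ≤ d3)
    (hsum : 1/72 ≤ d1 + d2 + d3) :
    min u (1/72) ≤ min u d1 + min u d2 + min u d3 := by
  have n1 : 0 ≤ min u d1 := le_min hu h1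
  have n2 : 0 ≤ min u d2 := le_min hu h2
  have n3 : 0 ≤ min u d3 := le_min hu h3
  rcases le_or_gt u d1 with c1 | c1
  · rw [min_eq_left c1]; have := min_le_left u (1/72); linarith
  rcases le_or_gt u d2 with c2 | c2
  · rw [min_eq_left c2]; have := min_le_left u (1/72); linarith
  rcases le_or_gt u d3 with c3 | c3
  · rw [min_eq_left c3]; have := min_le_left u (1/72); linarith
  rw [min_eq_right (le_of_lt c1), min_eq_right (le_of_lt c2), min_eq_right (le_of_lt c3)]
  have := min_le_right u (1/72); linarith

lemma polyA (r : ℝ) (h1 : 1/2 ≤ r) (h2 : r ≤ 5/8) :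
    (1:ℝ)/384 ≤ r^3/75 - (r-1/2)^3/3 + (1/6)*(1/72) := by
  nlinarith [sq_nonneg (r - 1/2), mul_nonneg (sub_nonneg.2 h1) (sub_nonneg.2 h2),
    mul_nonneg (mul_nonneg (sub_nonneg.2 h1) (sub_nonneg.2 h2)) (sub_nonneg.2 h1),
    mul_nonneg (sub_nonneg.2 h1) (sq_nonneg (r-1/2))]

lemma polyB (r : ℝ) (h1 : 1/2 ≤ r) (h2 : r ≤ 5/8) :
    (1:ℝ)/384 ≤ r^3/75 - (r-1/2)^3/3 + (2/3-r)^2/6 := by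
  nlinarith [sq_nonneg (r - 1/2), sq_nonneg (r - 5/8), mul_nonneg (sub_nonneg.2 h1) (sub_nonneg.2 h2),
    mul_nonneg (mul_nonneg (sub_nonneg.2 h1) (sub_nonneg.2 h2)) (sub_nonneg.2 h1),
    mul_nonneg (sub_nonneg.2 h2) (sq_nonneg (r-1/2)),
    mul_nonneg (sub_nonneg.2 h1) (sq_nonneg (r-5/8))]

lemma quant_lb' (n : ℕ) (hn : 0 < n) (γ : Finset ℝ) (h : γ.Nonempty) (hcard : γ.card ≤ n)
    (a b : ℝ) (hab : a ≤ b) :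
    (b-a)^3/(12*(n:ℝ)^2) ≤ ∫ x in a..b, fmin γ x := by
  refine le_trans ?_ (quant_lb γ.card γ h rfl a b hab)
  obtain ⟨m, hm⟩ : ∃ m, γ.card = m := ⟨_, rfl⟩
  rw [hm]
  have h1m : 1 ≤ m := by rw [← hm]; exact Finset.card_pos.mpr h
  have hmn : m ≤ n := by rw [← hm]; exact hcard
  have c1 : (1:ℝ) ≤ (m:ℝ) := by exact_mod_cast h1m
  have c2 : (m:ℝ) ≤ (n:ℝ) := by exact_mod_cast hmn
  apply div_le_div_of_nonneg_left (pow_nonneg (sub_nonneg.2 hab) 3) (by positivity)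
  nlinarith

lemma uniform_mono (γ σ : Finset ℝ) (h : γ.Nonempty) (hσ : σ.Nonempty)
    (hptw : ∀ x ∈ Icc (0:ℝ) (1/2), fmin σ x ≤ fmin γ x) :
    ∫ x in (0:ℝ)..(1/2), fmin σ x ≤ ∫ x in (0:ℝ)..(1/2), fmin γ x :=
  intervalIntegral.integral_mono_on (by norm_num)
    (fmin_intervalIntegrable σ hσ 0 _) (fmin_intervalIntegrable γ h 0 _) hptw

set_option maxHeartbeats 2000000 in
lemma main5 (γ : Finset ℝ) (h : γ.Nonempty) (hcard : γ.card = 5) :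
    1/384 ≤ (∫ x in (0:ℝ)..(1/2), fmin γ x) + (1/6)*(fmin γ (2/3) + fmin γ (5/6) + fmin γ 1) := by
  classical
  set A := γ.filter (fun y => y ≤ 5/8) with hA_def
  by_cases hA : A.card ≤ 2
  · -- Case 1: at most 2 points ≤ 5/8
    set σ : Finset ℝ := insert (5/8 : ℝ) A with hσ_def
    have hσne : σ.Nonempty := ⟨5/8, Finset.mem_insert_self _ _⟩
    have hσcard : σ.card ≤ 3 := le_trans (Finset.card_insert_le _ _) (by omega)
    have hσmax : ∀ y ∈ σ, y ≤ 5/8 := by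
      intro y hy
      rcases Finset.mem_insert.mp hy with rfl | hy'
      · exact le_rfl
      · exact (Finset.mem_filter.mp hy').2
    have hb := three_pt_lb σ hσne (5/8) (Finset.mem_insert_self _ _) hσmax (by norm_num) hσcard
    have h1 : ((5/8:ℝ))^3/75 - ((5/8:ℝ)-1/2)^3/3 = 1/384 := by norm_num
    have hptw : ∀ x ∈ Icc (0:ℝ) (1/2), fmin σ x ≤ fmin γ x := by
      intro x hx
      apply le_fmin γ h
      intro c hc
      by_cases hc5 : c ≤ 5/8
      · exact fmin_le σ hσne (Finset.mem_insert_of_mem (Finset.mem_filter.mpr ⟨hc, hc5⟩)) x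
      · calc fmin σ x ≤ (x - 5/8)^2 := fmin_le σ hσne (Finset.mem_insert_self _ _) x
          _ ≤ (x - c)^2 := by nlinarith [hx.2, not_le.mp hc5]
    have hIu : (1:ℝ)/384 ≤ ∫ x in (0:ℝ)..(1/2), fmin γ x := by
      rw [← h1]
      exact le_trans hb (uniform_mono γ σ h hσne hptw)
    nlinarith [fmin_nonneg γ h (2/3), fmin_nonneg γ h (5/6), fmin_nonneg γ h 1]
  · -- Case 2
    push_neg at hA
    set A' := γ.filter (fun y => y ≤ 2/3) with hA'_def
    have hAA' : A ⊆ A' := by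
      intro y hy
      have := Finset.mem_filter.mp hy
      exact Finset.mem_filter.mpr ⟨this.1, by linarith [this.2]⟩
    have hA'3 : 3 ≤ A'.card := le_trans hA (Finset.card_le_card hAA')
    have hA'ne : A'.Nonempty := Finset.card_pos.mp (by omega)
    set r := A'.max' hA'ne with hr_def
    have hrmem : r ∈ A' := A'.max'_mem hA'ne
    have hrγ : r ∈ γ := (Finset.mem_filter.mp hrmem).1
    have hr23 : r ≤ 2/3 := (Finset.mem_filter.mp hrmem).2
    have hrmax : ∀ y ∈ A', y ≤ r := fun y hy => A'.le_max' y hy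
    have hA'sub : A' ⊆ γ := Finset.filter_subset _ _
    by_cases hB : 4 ≤ A'.card
    · -- Case 2a: at least 4 points ≤ 2/3
      set B' := γ \ A' with hB'_def
      have hB'card : B'.card ≤ 1 := by
        rw [hB'_def, Finset.card_sdiff_of_subset hA'sub, hcard]
        omega
      -- extract q
      obtain ⟨q, hq⟩ : ∃ q : ℝ, ∀ c ∈ γ, c ≤ r ∨ c = q := by
        rcases B'.eq_empty_or_nonempty with hemp | ⟨q0, hq0⟩
        · refine ⟨r, fun c hc => Or.inl ?_⟩
          have : c ∈ A' := by
            by_contra hcn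
            exact (Finset.eq_empty_iff_forall_notMem.mp hemp c) (Finset.mem_sdiff.mpr ⟨hc, hcn⟩)
          exact hrmax c this
        · refine ⟨q0, fun c hc => ?_⟩
          by_cases hcA : c ∈ A'
          · exact Or.inl (hrmax c hcA)
          · exact Or.inr (Finset.card_le_one.mp hB'card c
              (Finset.mem_sdiff.mpr ⟨hc, hcA⟩) q0 hq0)
      have hfa : ∀ a : ℝ, 2/3 ≤ a → min ((a-r)^2) ((a-q)^2) ≤ fmin γ a := by
        intro a ha
        apply le_fmin γ h
        intro c hc
        rcases hq c hc with hcr | rfl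
        · calc min ((a-r)^2) ((a-q)^2) ≤ (a-r)^2 := min_le_left _ _
            _ ≤ (a-c)^2 := by nlinarith [hr23, ha, hcr]
        · exact min_le_right _ _
      have hpig := pigeon r q
      have hIu : (1:ℝ)/2400 ≤ ∫ x in (0:ℝ)..(1/2), fmin γ x := by
        have hq' := quant_lb' 5 (by norm_num) γ h (le_of_eq hcard) 0 (1/2) (by norm_num)
        have heq : (1:ℝ)/2400 = ((1:ℝ)/2-0)^3/(12*((5:ℕ):ℝ)^2) := by norm_num
        exact le_trans (le_of_eq heq) hq'
      have h2 := hfa (2/3) (by norm_num)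
      have h5 := hfa (5/6) (by norm_num)
      have h6 := hfa 1 (by norm_num)
      nlinarith [hpig, hIu, h2, h5, h6]
    · -- Case 2b: A'.card = 3
      have hA'card : A'.card = 3 := by omega
      have hAeq : A = A' := Finset.eq_of_subset_of_card_le hAA' (by omega)
      have hr58 : r ≤ 5/8 := by
        have : r ∈ A := hAeq ▸ hrmem
        exact (Finset.mem_filter.mp this).2
      set B' := γ \ A' with hB'_def
      have hB'card : B'.card = 2 := by
        rw [hB'_def, Finset.card_sdiff_of_subset hA'sub, hcard, hA'card]
      obtain ⟨p, q, hpq, hB'eq⟩ := Finset.card_eq_two.mp hB'card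
      have hpB : p ∈ B' := by rw [hB'eq]; exact Finset.mem_insert_self _ _
      have hqB : q ∈ B' := by rw [hB'eq]; simp
      have hp23 : ¬ (p ≤ 2/3) := by
        have h1 := Finset.mem_sdiff.mp hpB
        intro hle
        exact h1.2 (Finset.mem_filter.mpr ⟨h1.1, hle⟩)
      have hq23 : ¬ (q ≤ 2/3) := by
        have h1 := Finset.mem_sdiff.mp hqB
        intro hle
        exact h1.2 (Finset.mem_filter.mpr ⟨h1.1, hle⟩)
      have hmem5 : ∀ c ∈ γ, c ≤ r ∨ c = p ∨ c = q := by
        intro c hc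
        by_cases hcA : c ∈ A'
        · exact Or.inl (hrmax c hcA)
        · have : c ∈ B' := Finset.mem_sdiff.mpr ⟨hc, hcA⟩
          rw [hB'eq] at this
          rcases Finset.mem_insert.mp this with rfl | h1
          · exact Or.inr (Or.inl rfl)
          · exact Or.inr (Or.inr (Finset.mem_singleton.mp h1))
      -- atom bound
      have hfa : ∀ a : ℝ, 2/3 ≤ a →
          min ((2/3-r)^2) (min ((a-p)^2) ((a-q)^2)) ≤ fmin γ a := by
        intro a ha
        apply le_fmin γ h
        intro c hc
        rcases hmem5 c hc with hcr | rfl | rfl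
        · calc min ((2/3-r)^2) (min ((a-p)^2) ((a-q)^2)) ≤ (2/3-r)^2 := min_le_left _ _
            _ ≤ (a-c)^2 := by nlinarith [hr23, ha, hcr]
        · exact le_trans (min_le_right _ _) (min_le_left _ _)
        · exact le_trans (min_le_right _ _) (min_le_right _ _)
      have hpig := pigeon p q
      have hms := minsum ((2/3-r)^2)
        (min ((2/3-p)^2) ((2/3-q)^2)) (min ((5/6-p)^2) ((5/6-q)^2)) (min ((1-p)^2) ((1-q)^2))
        (sq_nonneg _) (le_min (sq_nonneg _) (sq_nonneg _)) (le_min (sq_nonneg _) (sq_nonneg _))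
        (le_min (sq_nonneg _) (sq_nonneg _)) hpig
      have hatoms : min ((2/3-r)^2) (1/72) ≤ fmin γ (2/3) + fmin γ (5/6) + fmin γ 1 := by
        have h2 := hfa (2/3) (by norm_num)
        have h5 := hfa (5/6) (by norm_num)
        have h6 := hfa 1 (by norm_num)
        linarith
      by_cases hr12 : r ≤ 1/2
      · -- uniform via 4 points
        set σ : Finset ℝ := insert (2/3 : ℝ) A' with hσ_def
        have hσne : σ.Nonempty := ⟨2/3, Finset.mem_insert_self _ _⟩
        have hσcard : σ.card ≤ 4 := le_trans (Finset.card_insert_le _ _) (by omega)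
        have hσpos : 1 ≤ σ.card := Finset.card_pos.mpr hσne
        have hptw : ∀ x ∈ Icc (0:ℝ) (1/2), fmin σ x ≤ fmin γ x := by
          intro x hx
          apply le_fmin γ h
          intro c hc
          rcases hmem5 c hc with hcr | rfl | rfl
          · exact fmin_le σ hσne (Finset.mem_insert_of_mem (Finset.mem_filter.mpr
              ⟨hc, le_trans hcr hr23⟩)) x
          · calc fmin σ x ≤ (x - 2/3)^2 := fmin_le σ hσne (Finset.mem_insert_self _ _) x
              _ ≤ (x - c)^2 := by nlinarith [hx.2, not_le.mp hp23]
          · calc fmin σ x ≤ (x - 2/3)^2 := fmin_le σ hσne (Finset.mem_insert_self _ _) x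
              _ ≤ (x - c)^2 := by nlinarith [hx.2, not_le.mp hq23]
        have hIu : (1:ℝ)/1536 ≤ ∫ x in (0:ℝ)..(1/2), fmin γ x := by
          have hq' := quant_lb' 4 (by norm_num) σ hσne hσcard 0 (1/2) (by norm_num)
          have heq : (1:ℝ)/1536 = ((1:ℝ)/2-0)^3/(12*((4:ℕ):ℝ)^2) := by norm_num
          exact le_trans (le_of_eq heq) (le_trans hq' (uniform_mono γ σ h hσne hptw))
        have humin : min ((2/3-r)^2) (1/72) = 1/72 := by
          apply min_eq_right
          nlinarith [hr12]
        rw [humin] at hatoms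
        linarith
      · -- r ∈ [1/2, 5/8]
        push_neg at hr12
        have hr12' : 1/2 ≤ r := le_of_lt hr12
        have hA'max58 : ∀ y ∈ A', y ≤ 5/8 := by
          intro y hy
          have : y ∈ A := hAeq ▸ hy
          exact (Finset.mem_filter.mp this).2
        have hptw : ∀ x ∈ Icc (0:ℝ) (1/2), fmin A' x ≤ fmin γ x := by
          intro x hx
          apply le_fmin γ h
          intro c hc
          rcases hmem5 c hc with hcr | rfl | rfl
          · exact fmin_le A' hA'ne (Finset.mem_filter.mpr ⟨hc, le_trans hcr hr23⟩) x
          · calc fmin A' x ≤ (x - r)^2 := fmin_le A' hA'ne hrmem x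
              _ ≤ (x - c)^2 := by nlinarith [hx.2, not_le.mp hp23, hr23, hr12']
          · calc fmin A' x ≤ (x - r)^2 := fmin_le A' hA'ne hrmem x
              _ ≤ (x - c)^2 := by nlinarith [hx.2, not_le.mp hq23, hr23, hr12']
        have hIu : r^3/75 - (r-1/2)^3/3 ≤ ∫ x in (0:ℝ)..(1/2), fmin γ x :=
          le_trans (three_pt_lb A' hA'ne r hrmem hrmax hr12' (le_of_eq hA'card))
            (uniform_mono γ A' h hA'ne hptw)
        rcases le_total ((2/3-r)^2) (1/72) with hcmp | hcmp
        · rw [min_eq_left hcmp] at hatoms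
          nlinarith [polyB r hr12' hr58, hIu, hatoms]
        · rw [min_eq_right hcmp] at hatoms
          nlinarith [polyA r hr12' hr58, hIu, hatoms]

lemma P_eq : mix (unif 0 (1/2)) discD = volume.restrict (Icc 0 (1/2)) +
    (6 : ℝ≥0∞)⁻¹ • (Measure.dirac (2/3) + Measure.dirac (5/6) + Measure.dirac 1) := by
  rw [mix, unif, discD, smul_smul, smul_smul]
  have h1 : ENNReal.ofReal (1/2 - 0 : ℝ) = 2⁻¹ := by
    rw [show (1/2 - 0 : ℝ) = 2⁻¹ by norm_num, ENNReal.ofReal_inv_of_pos (by norm_num)]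
    norm_num
  rw [h1, inv_inv, ENNReal.inv_mul_cancel (by norm_num) (by norm_num)]
  have h2 : (2 : ℝ≥0∞)⁻¹ * 3⁻¹ = 6⁻¹ := by
    rw [← ENNReal.mul_inv (by norm_num) (by norm_num)]; norm_num
  rw [h2, one_smul]

lemma integrable_dirac' {f : ℝ → ℝ} (hf : Continuous f) (a : ℝ) :
    Integrable f (Measure.dirac a) := by
  refine ⟨hf.aestronglyMeasurable, ?_⟩
  simp only [HasFiniteIntegral, lintegral_dirac]
  exact ENNReal.coe_lt_top

lemma distortion_eq (γ : Finset ℝ) (h : γ.Nonempty) :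
    distortion (mix (unif 0 (1/2)) discD) γ =
      (∫ x in (0:ℝ)..(1/2), fmin γ x) + (1/6) * (fmin γ (2/3) + fmin γ (5/6) + fmin γ 1) := by
  have hf := fmin_continuous γ h
  have h0 : distortion (mix (unif 0 (1/2)) discD) γ = ∫ x, fmin γ x ∂(mix (unif 0 (1/2)) discD) := rfl
  rw [h0, P_eq]
  have hd : ∀ a : ℝ, Integrable (fmin γ) (Measure.dirac a) := integrable_dirac' hf
  have hsum : Integrable (fmin γ) (Measure.dirac (2/3) + Measure.dirac (5/6) + Measure.dirac (1:ℝ)) :=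
    ((hd _).add_measure (hd _)).add_measure (hd _)
  rw [integral_add_measure (hf.integrableOn_Icc) (hsum.smul_measure (by norm_num)),
    integral_smul_measure, integral_add_measure ((hd _).add_measure (hd _)) (hd _),
    integral_add_measure (hd _) (hd _), integral_dirac, integral_dirac, integral_dirac,
    intervalIntegral.integral_of_le (by norm_num : (0:ℝ) ≤ 1/2),
    ← integral_Icc_eq_integral_Ioc]
  have h6 : ((6:ℝ≥0∞)⁻¹).toReal = 1/6 := by
    rw [ENNReal.toReal_inv]; norm_num
  rw [h6]
  simp only [smul_eq_mul]
  try ring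

lemma lower_bound (γ : Finset ℝ) (h : γ.Nonempty) (hc : γ.card ≤ 5) :
    1/384 ≤ (∫ x in (0:ℝ)..(1/2), fmin γ x) + (1/6)*(fmin γ (2/3) + fmin γ (5/6) + fmin γ 1) := by
  obtain ⟨γ', hsub, hcard'⟩ := Infinite.exists_superset_card_eq γ 5 hc
  have h' : γ'.Nonempty := Finset.card_pos.mp (by omega)
  have hptw : ∀ x : ℝ, fmin γ' x ≤ fmin γ x := fun x =>
    le_fmin γ h (fun c hcm => fmin_le γ' h' (hsub hcm) x)
  refine le_trans (main5 γ' h' hcard') ?_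
  have hIu := uniform_mono γ γ' h h' (fun x _ => hptw x)
  have h1 := hptw (2/3)
  have h2 := hptw (5/6)
  have h3 := hptw 1
  linarith

lemma gstar_card : ({1/8, 3/8, 2/3, 5/6, 1} : Finset ℝ).card = 5 := by
  rw [Finset.card_insert_of_notMem (by norm_num [Finset.mem_insert, Finset.mem_singleton]),
    Finset.card_insert_of_notMem (by norm_num [Finset.mem_insert, Finset.mem_singleton]),
    Finset.card_insert_of_notMem (by norm_num [Finset.mem_insert, Finset.mem_singleton]),
    Finset.card_insert_of_notMem (by norm_num [Finset.mem_singleton]),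
    Finset.card_singleton]

lemma gstar_ne : ({1/8, 3/8, 2/3, 5/6, 1} : Finset ℝ).Nonempty :=
  ⟨1/8, Finset.mem_insert_self _ _⟩

lemma gstar_Iu : ∫ x in (0:ℝ)..(1/2), fmin {1/8, 3/8, 2/3, 5/6, 1} x = 1/384 := by
  have hne := gstar_ne
  have h38 : (3/8 : ℝ) ∈ ({1/8, 3/8, 2/3, 5/6, 1} : Finset ℝ) := by
    simp [Finset.mem_insert]
  have h1 : EqOn (fmin {1/8, 3/8, 2/3, 5/6, 1}) (fun x => (x - 1/8)^2) (uIcc (0:ℝ) (1/4)) := by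
    intro x hx
    rw [uIcc_of_le (by norm_num)] at hx
    apply le_antisymm (fmin_le _ hne (Finset.mem_insert_self _ _) x)
    apply le_fmin _ hne
    intro c hc
    simp only [Finset.mem_insert, Finset.mem_singleton] at hc
    rcases hc with rfl | rfl | rfl | rfl | rfl <;> nlinarith [hx.1, hx.2]
  have h2 : EqOn (fmin {1/8, 3/8, 2/3, 5/6, 1}) (fun x => (x - 3/8)^2) (uIcc (1/4:ℝ) (1/2)) := by
    intro x hx
    rw [uIcc_of_le (by norm_num)] at hx
    apply le_antisymm (fmin_le _ hne h38 x)
    apply le_fmin _ hne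
    intro c hc
    simp only [Finset.mem_insert, Finset.mem_singleton] at hc
    rcases hc with rfl | rfl | rfl | rfl | rfl <;> nlinarith [hx.1, hx.2]
  rw [← intervalIntegral.integral_add_adjacent_intervals
    (fmin_intervalIntegrable _ hne 0 (1/4)) (fmin_intervalIntegrable _ hne (1/4) (1/2)),
    intervalIntegral.integral_congr h1, intervalIntegral.integral_congr h2, int_sq, int_sq]
  norm_num

lemma gstar_atom (a : ℝ) (ha : a ∈ ({1/8, 3/8, 2/3, 5/6, 1} : Finset ℝ)) :
    fmin {1/8, 3/8, 2/3, 5/6, 1} a = 0 := by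
  refine le_antisymm ?_ (fmin_nonneg _ gstar_ne a)
  have := fmin_le _ gstar_ne ha a
  simpa using this

theorem stmt4 (P : Measure ℝ) (hP : P = mix (unif 0 (1/2)) discD) :
    IsOptimalSet P 5 ({1/8, 3/8, 2/3, 5/6, 1} : Finset ℝ) ∧ quantErr P 5 = 1/384 := by
  subst hP
  have hne := gstar_ne
  have hd : distortion (mix (unif 0 (1/2)) discD) ({1/8, 3/8, 2/3, 5/6, 1} : Finset ℝ) = 1/384 := by
    rw [distortion_eq _ hne, gstar_Iu,
      gstar_atom (2/3) (by simp [Finset.mem_insert]),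
      gstar_atom (5/6) (by simp [Finset.mem_insert]),
      gstar_atom 1 (by simp [Finset.mem_insert])]
    norm_num
  have hmemS : (1/384 : ℝ) ∈ {v : ℝ | ∃ γ : Finset ℝ, γ.Nonempty ∧ γ.card ≤ 5 ∧
      v = distortion (mix (unif 0 (1/2)) discD) γ} :=
    ⟨{1/8, 3/8, 2/3, 5/6, 1}, hne, le_of_eq gstar_card, hd.symm⟩
  have hlbS : ∀ v ∈ {v : ℝ | ∃ γ : Finset ℝ, γ.Nonempty ∧ γ.card ≤ 5 ∧
      v = distortion (mix (unif 0 (1/2)) discD) γ}, (1/384 : ℝ) ≤ v := by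
    rintro v ⟨γ, hγne, hγc, rfl⟩
    rw [distortion_eq _ hγne]
    exact lower_bound γ hγne hγc
  have hq : quantErr (mix (unif 0 (1/2)) discD) 5 = 1/384 := by
    have h0 : quantErr (mix (unif 0 (1/2)) discD) 5 = sInf {v : ℝ | ∃ γ : Finset ℝ,
      γ.Nonempty ∧ γ.card ≤ 5 ∧ v = distortion (mix (unif 0 (1/2)) discD) γ} := rfl
    rw [h0]
    exact le_antisymm (csInf_le ⟨1/384, fun v hv => hlbS v hv⟩ hmemS)
      (le_csInf ⟨_, hmemS⟩ hlbS)
  exact ⟨⟨hne, le_of_eq gstar_card, by rw [hd, hq]⟩, hq⟩
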